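/- Let n ≥ 4 be even, F any field, β ∈ F \ {0}, and let L be the (n+1)-dimensional n-Lie algebra with nonzero brackets [e_2,...,e_{n+1}] = e_1 + βe_2 and [e_1,e_3,...,e_{n+1}] = e_2 (case (2b)). Then the element N = x_2 x_1 − x_1 x_2 lies in the ideal I of F⟨x_1,...,x_{n+1}⟩ generated by G_1 = (-1)^{⌊n/2⌋}(alt(x_2,...,x_{n+1}) − (x_1 + βx_2)), G_2 = (-1)^{⌊n/2⌋}(alt(x_1,x_3,...,x_{n+1}) − x_2), and G_i = (-1)^{⌊n/2⌋} alt(x_1,...,x̂_i,...,x_{n+1}) for 3 ≤ i ≤ n+1. -/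
import Mathlib


open FreeAlgebra

/-- The `n`-ary alternating sum in an associative algebra. -/
noncomputable def altSum {A : Type} [Ring A] (n : ℕ) (x : Fin n → A) : A :=
  ∑ σ : Equiv.Perm (Fin n), (Equiv.Perm.sign σ : ℤ) • (List.ofFn fun k => x (σ k)).prod

open Equiv MulOpposite

lemma reverse_ofFn {α : Type*} {n : ℕ} (f : Fin n → α) :
    (List.ofFn f).reverse = List.ofFn (fun k => f k.rev) := by
  apply List.ext_getElem
  · simp
  · intro i h1 h2
    simp only [List.getElem_reverse, List.getElem_ofFn, List.length_ofFn] at *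
    congr 1
    ext
    simp [Fin.val_rev]
    omega

def insEquiv (n : ℕ) : Fin (n + 1) × Equiv.Perm (Fin n) ≃ Equiv.Perm (Fin (n + 1)) where
  toFun p := (Fin.cycleRange p.1)⁻¹ * Equiv.Perm.decomposeFin.symm (0, p.2)
  invFun τ := (τ 0, (Equiv.Perm.decomposeFin ((Fin.cycleRange (τ 0)) * τ)).2)
  left_inv := by
    rintro ⟨i, σ⟩
    have h0 : ((Fin.cycleRange i)⁻¹ * Equiv.Perm.decomposeFin.symm (0, σ)) 0 = i := by
      have h := Fin.cycleRange_self i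
      simp only [Equiv.Perm.mul_apply, Equiv.Perm.decomposeFin_symm_apply_zero]
      rw [← Equiv.Perm.eq_inv_iff_eq] at h
      exact h.symm
    refine Prod.ext h0 ?_
    simp only [h0]
    rw [mul_inv_cancel_left, Equiv.apply_symm_apply]
  right_inv := by
    intro τ
    have hc : (Fin.cycleRange (τ 0) * τ) 0 = 0 := by
      simp [Equiv.Perm.mul_apply, Fin.cycleRange_self]
    have h1 : (Equiv.Perm.decomposeFin (Fin.cycleRange (τ 0) * τ)).1 = 0 := by
      have h2 := Equiv.Perm.decomposeFin_symm_apply_zero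
        (Equiv.Perm.decomposeFin (Fin.cycleRange (τ 0) * τ)).1
        (Equiv.Perm.decomposeFin (Fin.cycleRange (τ 0) * τ)).2
      rw [Prod.mk.eta, Equiv.symm_apply_apply] at h2
      rw [← h2, hc]
    have h4 : Equiv.Perm.decomposeFin (Fin.cycleRange (τ 0) * τ)
        = (0, (Equiv.Perm.decomposeFin (Fin.cycleRange (τ 0) * τ)).2) := Prod.ext h1 rfl
    have h3 : Equiv.Perm.decomposeFin.symm
        (0, (Equiv.Perm.decomposeFin (Fin.cycleRange (τ 0) * τ)).2)
        = Fin.cycleRange (τ 0) * τ := by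
      rw [← h4, Equiv.symm_apply_apply]
    simp only [h3, inv_mul_cancel_left]

lemma insEquiv_apply_zero (n : ℕ) (i : Fin (n + 1)) (σ : Equiv.Perm (Fin n)) :
    insEquiv n (i, σ) 0 = i := by
  have h := Fin.cycleRange_self i
  simp only [insEquiv, Equiv.coe_fn_mk, Equiv.Perm.mul_apply,
    Equiv.Perm.decomposeFin_symm_apply_zero]
  rw [← Equiv.Perm.eq_inv_iff_eq] at h
  exact h.symm

lemma insEquiv_apply_succ (n : ℕ) (i : Fin (n + 1)) (σ : Equiv.Perm (Fin n)) (k : Fin n) :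
    insEquiv n (i, σ) k.succ = i.succAbove (σ k) := by
  simp only [insEquiv, Equiv.coe_fn_mk, Equiv.Perm.mul_apply,
    Equiv.Perm.decomposeFin_symm_apply_succ, Equiv.swap_self, Equiv.refl_apply]
  have h := Fin.cycleRange_succAbove i (σ k)
  rw [← Equiv.Perm.eq_inv_iff_eq] at h
  exact h.symm

lemma sign_insEquiv (n : ℕ) (i : Fin (n + 1)) (σ : Equiv.Perm (Fin n)) :
    Equiv.Perm.sign (insEquiv n (i, σ)) = (-1) ^ (i : ℕ) * Equiv.Perm.sign σ := by
  simp [insEquiv, map_mul, map_inv, Fin.sign_cycleRange, Equiv.Perm.decomposeFin.symm_sign,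
    inv_pow]

variable {A : Type} [Ring A]

lemma altSum_succ_left (n : ℕ) (x : Fin (n + 1) → A) :
    altSum (n + 1) x
      = ∑ i : Fin (n + 1), (-1 : ℤ) ^ (i : ℕ) •
          (x i * altSum n fun k => x (i.succAbove k)) := by
  rw [altSum]
  rw [← Fintype.sum_equiv (insEquiv n)
      (fun p => (Equiv.Perm.sign (insEquiv n p) : ℤ) •
        (List.ofFn fun k => x (insEquiv n p k)).prod)
      (fun σ => (Equiv.Perm.sign σ : ℤ) • (List.ofFn fun k => x (σ k)).prod)
      (fun p => rfl)]
  rw [Fintype.sum_prod_type]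
  refine Finset.sum_congr rfl fun i _ => ?_
  rw [altSum, Finset.mul_sum, Finset.smul_sum]
  refine Finset.sum_congr rfl fun σ _ => ?_
  have hp : (List.ofFn fun k => x (insEquiv n (i, σ) k)).prod
      = x i * (List.ofFn fun k => x (i.succAbove (σ k))).prod := by
    rw [List.ofFn_succ]
    simp only [insEquiv_apply_zero, insEquiv_apply_succ, List.prod_cons]
  rw [hp, sign_insEquiv]
  push_cast
  rw [mul_smul_comm, smul_smul]

lemma op_altSum (n : ℕ) (x : Fin n → A) :
    op (altSum n x) = altSum n (fun k => op (x k.rev)) := by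
  have hrr : (Fin.revPerm : Equiv.Perm (Fin n)) * Fin.revPerm = 1 := by
    ext k
    simp [Equiv.Perm.mul_apply]
  rw [altSum, altSum, ← opAddEquiv_apply, map_sum]
  refine Fintype.sum_equiv ((Equiv.mulRight (Fin.revPerm : Equiv.Perm (Fin n))).trans
    (Equiv.mulLeft (Fin.revPerm : Equiv.Perm (Fin n)))) _ _ fun σ => ?_
  have hs : Equiv.Perm.sign (Fin.revPerm * (σ * Fin.revPerm)) = Equiv.Perm.sign σ := by
    have h1 : (Fin.revPerm : Equiv.Perm (Fin n)) * (σ * Fin.revPerm)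
        = Fin.revPerm * σ * Fin.revPerm := by group
    rw [h1, map_mul, map_mul, mul_comm, ← mul_assoc, ← map_mul, hrr, map_one, one_mul]
  simp only [Equiv.trans_apply, Equiv.coe_mulRight, Equiv.coe_mulLeft]
  rw [map_zsmul, hs]
  congr 1
  have hop : (opAddEquiv : A ≃+ Aᵐᵒᵖ) (List.ofFn fun k => x (σ k)).prod
      = ((List.ofFn fun k => x (σ k)).map op).reverse.prod := by
    rw [opAddEquiv_apply, op_list_prod]
  rw [hop, List.map_ofFn, reverse_ofFn]
  have hfun : (fun k : Fin n => (op ∘ fun k => x (σ k)) k.rev)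
      = fun k : Fin n => opAddEquiv (x (((Fin.revPerm * (σ * Fin.revPerm) : Equiv.Perm (Fin n))) k).rev) := by
    funext k
    simp [Equiv.Perm.mul_apply]
  rw [hfun]

lemma neg_one_pow_rev {n : ℕ} (hn : Even n) (i : Fin (n + 1)) :
    ((-1 : ℤ)) ^ ((i.rev : Fin (n + 1)) : ℕ) = (-1) ^ (i : ℕ) := by
  have hle : (i : ℕ) ≤ n := Nat.lt_succ_iff.mp i.isLt
  have hv : ((i.rev : Fin (n + 1)) : ℕ) = n - i := by
    rw [Fin.val_rev]
    omega
  have hsub : (n - (i : ℕ)) + i = n := Nat.sub_add_cancel hle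
  have h2 : ((-1 : ℤ)) ^ (n - (i : ℕ)) * (-1) ^ (i : ℕ) = 1 := by
    rw [← pow_add, hsub]
    exact hn.neg_one_pow
  have h3 : ((-1 : ℤ)) ^ (i : ℕ) * (-1) ^ (i : ℕ) = 1 := by
    rw [← pow_add]
    have he : Even ((i : ℕ) + (i : ℕ)) := ⟨_, rfl⟩
    exact he.neg_one_pow
  rw [hv]
  calc (-1 : ℤ) ^ (n - (i : ℕ))
      = (-1) ^ (n - (i : ℕ)) * ((-1) ^ (i : ℕ) * (-1) ^ (i : ℕ)) := by rw [h3, mul_one]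
    _ = ((-1) ^ (n - (i : ℕ)) * (-1) ^ (i : ℕ)) * (-1) ^ (i : ℕ) := by ring
    _ = (-1) ^ (i : ℕ) := by rw [h2, one_mul]

lemma altSum_succ_right (n : ℕ) (hn : Even n) (x : Fin (n + 1) → A) :
    altSum (n + 1) x
      = ∑ i : Fin (n + 1), (-1 : ℤ) ^ (i : ℕ) •
          ((altSum n fun k => x (i.succAbove k)) * x i) := by
  apply op_injective
  rw [op_altSum, altSum_succ_left, ← opAddEquiv_apply, map_sum]
  refine Fintype.sum_equiv (Fin.revPerm : Equiv.Perm (Fin (n + 1))) _ _ fun i => ?_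
  have h1 : (fun k : Fin n => opAddEquiv (x (Fin.rev (i.succAbove k))))
      = fun k : Fin n => op ((x ∘ (Fin.rev i).succAbove) (Fin.rev k)) := by
    funext k
    simp [Fin.rev_succAbove]
  rw [h1, ← op_altSum n (x ∘ (Fin.rev i).succAbove)]
  rw [Fin.revPerm_apply, map_zsmul, opAddEquiv_apply, op_mul, neg_one_pow_rev hn]
  rfl

/-- Case (2b): for the `n`-Lie algebra with nonzero brackets
`[e_2,...,e_{n+1}] = e_1 + βe_2` (`β ≠ 0`) and `[e_1,e_3,...,e_{n+1}] = e_2` (`n ≥ 4`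
even), the element `N = x_2x_1 − x_1x_2` lies in the two-sided ideal
`I = ⟨G_1, ..., G_{n+1}⟩`.  (`0`-indexed: `x_1 ↔ ι F 0`, `x_2 ↔ ι F 1`.) -/
theorem case2b_new_generator (F : Type) [Field F]
    (n : ℕ) (hn : 4 ≤ n) (heven : Even n) (β : F) (hβ : β ≠ 0)
    (G : Fin (n + 1) → FreeAlgebra F (Fin (n + 1)))
    (hG0 : G 0 = (-1 : F) ^ (n / 2) •
      (altSum n (fun k => ι F ((0 : Fin (n + 1)).succAbove k)) - (ι F 0 + β • ι F 1)))
    (hG1 : G 1 = (-1 : F) ^ (n / 2) •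
      (altSum n (fun k => ι F ((1 : Fin (n + 1)).succAbove k)) - ι F 1))
    (hG : ∀ i : Fin (n + 1), 2 ≤ (i : ℕ) →
      G i = (-1 : F) ^ (n / 2) • altSum n (fun k => ι F (i.succAbove k))) :
    ι F 1 * ι F 0 - ι F 0 * ι F 1 ∈
      Submodule.span F {z : FreeAlgebra F (Fin (n + 1)) |
        ∃ (a b : FreeAlgebra F (Fin (n + 1))) (i : Fin (n + 1)), z = a * G i * b} := by
  set c : F := (-1 : F) ^ (n / 2) with hc
  set Aa : Fin (n + 1) → FreeAlgebra F (Fin (n + 1)) :=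
    fun i => altSum n fun k => ι F (i.succAbove k) with hAa
  set D : Fin (n + 1) → FreeAlgebra F (Fin (n + 1)) :=
    fun i => if i = 0 then ι F 0 + β • ι F 1 else if i = 1 then ι F 1 else 0 with hD
  have hv1 : ((1 : Fin (n + 1)) : ℕ) = 1 := by
    rw [Fin.val_one']
    exact Nat.mod_eq_of_lt (by omega)
  have h10 : (1 : Fin (n + 1)) ≠ 0 := by
    intro h
    apply (one_ne_zero : (1 : ℕ) ≠ 0)
    rw [← hv1, h, Fin.val_zero]
  have hcc : ∀ z : FreeAlgebra F (Fin (n + 1)), c • c • z = z := by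
    intro z
    rw [smul_smul, hc, ← pow_add]
    have he : Even (n / 2 + n / 2) := ⟨_, rfl⟩
    rw [he.neg_one_pow, one_smul]
  have hA : ∀ i, Aa i = c • G i + D i := by
    intro i
    by_cases h0 : i = 0
    · subst h0
      simp only [hAa, hD, if_pos rfl, hG0, hcc]
      abel
    by_cases h1 : i = 1
    · subst h1
      simp [hAa, hD, h10, hG1, hcc]
      try abel
    · have h2 : 2 ≤ (i : ℕ) := by
        have e0 : (i : ℕ) ≠ 0 := by
          intro h
          exact h0 (Fin.ext (by simp [h]))
        have e1 : (i : ℕ) ≠ 1 := by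
          intro h
          exact h1 (Fin.ext (by rw [h, hv1]))
        omega
      simp only [hAa, hD, if_neg h0, if_neg h1, hG i h2, hcc, add_zero]
  have hz : ∀ (m : ℕ) (z : FreeAlgebra F (Fin (n + 1))),
      ((-1 : ℤ) ^ m) • z = ((-1 : F) ^ m) • z := by
    intro m z
    rw [← Int.cast_smul_eq_zsmul F]
    push_cast
    ring_nf
  have e0 : ∑ i : Fin (n + 1), (-1 : ℤ) ^ (i : ℕ) • (ι F i * Aa i - Aa i * ι F i) = 0 := by
    simp only [hAa, smul_sub]
    rw [Finset.sum_sub_distrib, ← altSum_succ_left n (ι F),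
      ← altSum_succ_right n heven (ι F), sub_self]
  have expand : ∀ i : Fin (n + 1), ι F i * Aa i - Aa i * ι F i
      = c • (ι F i * G i - G i * ι F i) + (ι F i * D i - D i * ι F i) := by
    intro i
    rw [hA i]
    simp only [mul_add, add_mul, mul_smul_comm, smul_mul_assoc, smul_sub]
    abel
  set T : FreeAlgebra F (Fin (n + 1)) :=
    ∑ i : Fin (n + 1), ((-1 : F) ^ (i : ℕ)) • (ι F i * G i - G i * ι F i) with hT
  have sum_split : ∑ i : Fin (n + 1), (-1 : ℤ) ^ (i : ℕ) • (ι F i * Aa i - Aa i * ι F i)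
      = c • T + ∑ i : Fin (n + 1), (-1 : ℤ) ^ (i : ℕ) • (ι F i * D i - D i * ι F i) := by
    rw [hT, Finset.smul_sum, ← Finset.sum_add_distrib]
    refine Finset.sum_congr rfl fun i _ => ?_
    rw [expand i, smul_add, smul_comm ((-1 : ℤ) ^ (i : ℕ)) c, hz]
  have hDsum : ∑ i : Fin (n + 1), (-1 : ℤ) ^ (i : ℕ) • (ι F i * D i - D i * ι F i)
      = β • (ι F 0 * ι F 1 - ι F 1 * ι F 0) := by
    rw [Finset.sum_eq_single (0 : Fin (n + 1))]
    · simp only [hD, if_pos rfl, Fin.val_zero, pow_zero, one_smul]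
      simp only [mul_add, add_mul, mul_smul_comm, smul_mul_assoc, smul_sub]
      abel
    · intro i _ hne
      by_cases h1 : i = 1
      · subst h1
        simp [hD, h10]
      · simp [hD, hne, h1]
    · intro h
      exact absurd (Finset.mem_univ _) h
  have key : c • T + β • (ι F 0 * ι F 1 - ι F 1 * ι F 0) = 0 := by
    rw [← hDsum, ← sum_split, e0]
  have hmain : ι F 1 * ι F 0 - ι F 0 * ι F 1 = β⁻¹ • (c • T) := by
    have h5 : c • T = β • (ι F 1 * ι F 0 - ι F 0 * ι F 1) := by
      have h6 : c • T = -(β • (ι F 0 * ι F 1 - ι F 1 * ι F 0)) :=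
        eq_neg_of_add_eq_zero_left key
      rw [h6, ← smul_neg, neg_sub]
    rw [h5, inv_smul_smul₀ hβ]
  rw [hmain]
  refine Submodule.smul_mem _ _ (Submodule.smul_mem _ _ ?_)
  refine Submodule.sum_mem _ fun i _ => ?_
  refine Submodule.smul_mem _ _ (sub_mem ?_ ?_)
  · exact Submodule.subset_span ⟨ι F i, 1, i, by rw [mul_one]⟩
  · exact Submodule.subset_span ⟨1, ι F i, i, by rw [one_mul]⟩
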